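/- Any T-path in G either contains an edge joining two distinct members of a T-subpartition 𝒳, or contains at least two edges of δ(K) for some connected component K of G∖𝒳. -/

import Mathlib

open scoped Classical

/-- A finite multigraph without selfloops: edges carry an (arbitrary) orientation
given by `src` and `tgt`, but are regarded as undirected. -/
structure Multigraph where
  V : Type
  E : Type
  [fV : Fintype V]
  [dV : DecidableEq V]
  [fE : Fintype E]
  [dE : DecidableEq E]
  src : E → V
  tgt : E → V
  noLoop : ∀ e, src e ≠ tgt e

attribute [instance] Multigraph.fV Multigraph.dV Multigraph.fE Multigraph.dE

namespace Multigraph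

variable (G : Multigraph)

/-- the edge `e` joins the vertices `u` and `v` (in either orientation). -/
def Joins (e : G.E) (u v : G.V) : Prop :=
  (G.src e = u ∧ G.tgt e = v) ∨ (G.src e = v ∧ G.tgt e = u)

/-- `δ(X)`: the set of edges with exactly one endpoint in `X`. -/
noncomputable def cutE (X : Set G.V) : Finset G.E :=
  Finset.univ.filter fun e =>
    (G.src e ∈ X ∧ G.tgt e ∉ X) ∨ (G.src e ∉ X ∧ G.tgt e ∈ X)

/-- `d(X) = |δ(X)|`. -/
noncomputable def d (X : Set G.V) : ℕ := (G.cutE X).card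

/-- adjacency within the induced subgraph on `W`. -/
def adjOn (W : Set G.V) (u v : G.V) : Prop :=
  u ∈ W ∧ v ∈ W ∧ ∃ e, G.Joins e u v

/-- `K` is the vertex set of a connected component of the subgraph induced on `W`. -/
def IsCompOf (W K : Set G.V) : Prop :=
  ∃ v ∈ W, K = {u | Relation.ReflTransGen (G.adjOn W) v u}

end Multigraph

/-- A `T`-path in `G`: a path whose two (distinct) endpoints are terminals of `T`
and whose internal vertices avoid `T`. -/
structure TPath (G : Multigraph) (T : Finset G.V) where
  verts : List G.V
  edges : List G.E
  hlen : verts.length = edges.length + 1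
  hne : edges ≠ []
  hadj : ∀ i (h : i < edges.length),
    G.Joins (edges.get ⟨i, h⟩) (verts.get ⟨i, by omega⟩) (verts.get ⟨i + 1, by omega⟩)
  nodup : verts.Nodup
  first : G.V
  last : G.V
  hfirst : verts.head? = some first
  hlast : verts.getLast? = some last
  hfirstT : first ∈ T
  hlastT : last ∈ T
  hinternal : ∀ i (h : i < verts.length), 0 < i → i < verts.length - 1 →
    verts.get ⟨i, h⟩ ∉ T

/-- a family of pairwise edge-disjoint `T`-paths. -/
def PairwiseEdgeDisjoint {G : Multigraph} {T : Finset G.V} {k : ℕ}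
    (P : Fin k → TPath G T) : Prop :=
  ∀ i j, i ≠ j → ∀ e, e ∈ (P i).edges → e ∉ (P j).edges

/-- A `T`-subpartition: pairwise disjoint vertex sets `X s` (for `s ∈ T`)
with `X s ∩ T = {s}`. -/
structure TSubpartition (G : Multigraph) (T : Finset G.V) where
  X : G.V → Set G.V
  hmem : ∀ s ∈ T, X s ∩ (T : Set G.V) = {s}
  hdisj : ∀ s ∈ T, ∀ t ∈ T, s ≠ t → Disjoint (X s) (X t)

namespace TSubpartition

variable {G : Multigraph} {T : Finset G.V} (𝒳 : TSubpartition G T)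

/-- the vertex set of `G ∖ 𝒳`. -/
def rest : Set G.V := (⋃ s ∈ T, 𝒳.X s)ᶜ

noncomputable def dSum : ℕ := ∑ s ∈ T, G.d (𝒳.X s)

/-- number of odd components of `G ∖ 𝒳`. -/
noncomputable def oddComps : ℕ :=
  {K : Set G.V | G.IsCompOf 𝒳.rest K ∧ Odd (G.d K)}.ncard

/-- `κ(𝒳) = (Σ_{s∈T} d(X_s) − odd(G∖𝒳)) / 2`. -/
noncomputable def kappa : ℚ := ((𝒳.dSum : ℚ) - (𝒳.oddComps : ℚ)) / 2

/-- `d(𝒳)`: the number of edges joining two distinct members of `𝒳`. -/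
noncomputable def dCross : ℕ :=
  (Finset.univ.filter fun e =>
    ∃ s ∈ T, ∃ t ∈ T, s ≠ t ∧ G.src e ∈ 𝒳.X s ∧ G.tgt e ∈ 𝒳.X t).card

end TSubpartition

/-- Every `T`-path either contains an edge joining two distinct members of a
`T`-subpartition `𝒳`, or contains at least two edges of `δ(K)` for some connected
component `K` of `G ∖ 𝒳`. -/
theorem TPath_cross_or_two_cut_edges (G : Multigraph) (T : Finset G.V)
    (𝒳 : TSubpartition G T) (p : TPath G T) :
    (∃ e ∈ p.edges, ∃ s ∈ T, ∃ t ∈ T, s ≠ t ∧ G.src e ∈ 𝒳.X s ∧ G.tgt e ∈ 𝒳.X t) ∨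
    (∃ K : Set G.V, G.IsCompOf 𝒳.rest K ∧ 2 ≤ (p.edges.toFinset ∩ G.cutE K).card) := by
  classical
  by_cases hcross : ∃ e ∈ p.edges, ∃ s ∈ T, ∃ t ∈ T, s ≠ t ∧
      G.src e ∈ 𝒳.X s ∧ G.tgt e ∈ 𝒳.X t
  · exact Or.inl hcross
  right
  set n := p.edges.length with hn
  have hnpos : 0 < n := List.length_pos_iff.mpr p.hne
  have hvlen : p.verts.length = n + 1 := p.hlen
  have hlt : ∀ j, j ≤ n → j < p.verts.length := by intro j hj; omega
  let v : ℕ → G.V := fun j => p.verts.get ⟨min j n, hlt _ (min_le_right _ _)⟩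
  have hv : ∀ j (hj : j ≤ n), v j = p.verts.get ⟨j, hlt j hj⟩ := by
    intro j hj
    simp only [v]
    congr 1
    exact Fin.ext (min_eq_left hj)
  have hvinj : ∀ i j, i ≤ n → j ≤ n → v i = v j → i = j := by
    intro i j hi hj hij
    rw [hv i hi, hv j hj] at hij
    have := (List.Nodup.get_inj_iff p.nodup).mp hij
    exact congrArg Fin.val this
  have hjoins : ∀ i (hi : i < n), G.Joins (p.edges.get ⟨i, hi⟩) (v i) (v (i+1)) := by
    intro i hi
    rw [hv i (by omega), hv (i+1) (by omega)]
    exact p.hadj i hi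
  -- v 0 = first, v n = last
  have hv0 : v 0 = p.first := by
    have h0 : 0 < p.verts.length := by omega
    have hh := p.hfirst
    rw [List.head?_eq_head (List.ne_nil_of_length_pos h0)] at hh
    rw [hv 0 (by omega)]
    simpa [List.head_eq_getElem] using Option.some.inj hh
  have hvn : v n = p.last := by
    have hne : p.verts ≠ [] := List.ne_nil_of_length_pos (by omega)
    have hh := p.hlast
    rw [List.getLast?_eq_getLast hne] at hh
    rw [hv n le_rfl]
    have h2 : p.verts.getLast hne = p.verts[p.verts.length - 1] := List.getLast_eq_getElem _
    simp only [h2, hvlen, Nat.add_sub_cancel] at hh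
    simpa using Option.some.inj hh
  -- membership helpers
  have hXs : ∀ s ∈ T, s ∈ 𝒳.X s := by
    intro s hs
    have := 𝒳.hmem s hs
    have : s ∈ 𝒳.X s ∩ (T : Set G.V) := by rw [this]; rfl
    exact this.1
  have hrest_iff : ∀ u, u ∈ 𝒳.rest ↔ ∀ s ∈ T, u ∉ 𝒳.X s := by
    intro u; simp [TSubpartition.rest]
  have huniq : ∀ u s t, s ∈ T → t ∈ T → u ∈ 𝒳.X s → u ∈ 𝒳.X t → s = t := by
    intro u s t hs ht hus hut
    by_contra hst
    exact Set.disjoint_left.mp (𝒳.hdisj s hs t ht hst) hus hut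
  have hsame : ∀ i (hi : i < n), ∀ s t, s ∈ T → t ∈ T →
      v i ∈ 𝒳.X s → v (i+1) ∈ 𝒳.X t → s = t := by
    intro i hi s t hs ht h1 h2
    by_contra hst
    apply hcross
    refine ⟨p.edges.get ⟨i, hi⟩, List.get_mem _ _, ?_⟩
    rcases hjoins i hi with ⟨h1', h2'⟩ | ⟨h1', h2'⟩
    · exact ⟨s, hs, t, ht, hst, h1' ▸ h1, h2' ▸ h2⟩
    · exact ⟨t, ht, s, hs, Ne.symm hst, h1' ▸ h2, h2' ▸ h1⟩
  have h0rest : v 0 ∉ 𝒳.rest := by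
    rw [hrest_iff]
    push_neg
    exact ⟨p.first, p.hfirstT, hv0 ▸ hXs p.first p.hfirstT⟩
  have hnrest : v n ∉ 𝒳.rest := by
    rw [hrest_iff]
    push_neg
    exact ⟨p.last, p.hlastT, hvn ▸ hXs p.last p.hlastT⟩
  -- there is a rest vertex on the path
  have hex : ∃ i, i ≤ n ∧ v i ∈ 𝒳.rest := by
    by_contra h
    push_neg at h
    have hall : ∀ i, i ≤ n → v i ∈ 𝒳.X p.first := by
      intro i
      induction i with
      | zero => intro _; exact hv0 ▸ hXs p.first p.hfirstT
      | succ i ih =>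
        intro hi
        have hvi := ih (by omega)
        have hr := h (i+1) hi
        rw [hrest_iff] at hr
        push_neg at hr
        obtain ⟨t, ht, hvt⟩ := hr
        have := hsame i (by omega) p.first t p.hfirstT ht hvi hvt
        rwa [this]
    have hfl : p.first ≠ p.last := by
      intro hfl
      have : (0 : ℕ) = n := hvinj 0 n (by omega) le_rfl (by rw [hv0, hvn, hfl])
      omega
    exact hfl (huniq (v n) p.first p.last p.hfirstT p.hlastT (hall n le_rfl)
      (hvn ▸ hXs p.last p.hlastT))
  obtain ⟨i0, hi0n, hi0rest⟩ := hex
  have hi0pos : 0 < i0 := by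
    rcases Nat.eq_zero_or_pos i0 with h | h
    · exact absurd (h ▸ hi0rest) h0rest
    · exact h
  have hi0lt : i0 < n := by
    rcases lt_or_eq_of_le hi0n with h | h
    · exact h
    · exact absurd (h ▸ hi0rest) hnrest
  -- a' : greatest index ≤ i0 with v a' ∉ rest
  set a' := Nat.findGreatest (fun j => v j ∉ 𝒳.rest) i0 with ha'
  have ha'spec : v a' ∉ 𝒳.rest :=
    Nat.findGreatest_spec (P := fun j => v j ∉ 𝒳.rest) (Nat.zero_le i0) h0rest
  have ha'le : a' ≤ i0 := Nat.findGreatest_le i0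
  have ha'lt : a' < i0 := by
    rcases lt_or_eq_of_le ha'le with h | h
    · exact h
    · exact absurd (h ▸ hi0rest) ha'spec
  have ha'max : ∀ j, a' < j → j ≤ i0 → v j ∈ 𝒳.rest := by
    intro j h1 h2
    by_contra hj
    exact absurd (Nat.le_findGreatest (P := fun j => v j ∉ 𝒳.rest) h2 hj) (by omega)
  -- b' : least index > i0 with v b' ∉ rest
  have hexb : ∃ j, i0 < j ∧ v j ∉ 𝒳.rest := ⟨n, hi0lt, hnrest⟩
  set b' := Nat.find hexb with hb'
  obtain ⟨hb'gt, hb'spec⟩ := Nat.find_spec hexb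
  have hb'le : b' ≤ n := Nat.find_min' hexb ⟨hi0lt, hnrest⟩
  have hb'min : ∀ j, i0 < j → j < b' → v j ∈ 𝒳.rest := by
    intro j h1 h2
    by_contra hj
    exact absurd (Nat.find_min' hexb ⟨h1, hj⟩) (by omega)
  have hrun : ∀ j, a' < j → j < b' → v j ∈ 𝒳.rest := by
    intro j h1 h2
    rcases le_or_gt j i0 with h | h
    · exact ha'max j h1 h
    · exact hb'min j h h2
  -- the component
  set K : Set G.V := {u | Relation.ReflTransGen (G.adjOn 𝒳.rest) (v i0) u} with hK
  have hKcomp : G.IsCompOf 𝒳.rest K := ⟨v i0, hi0rest, rfl⟩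
  have hKrest : K ⊆ 𝒳.rest := by
    intro u hu
    induction hu with
    | refl => exact hi0rest
    | tail _ hadj _ => exact hadj.2.1
  have hjsymm : ∀ e x y, G.Joins e x y → G.Joins e y x := by
    rintro e x y (⟨h1, h2⟩ | ⟨h1, h2⟩)
    · exact Or.inr ⟨h1, h2⟩
    · exact Or.inl ⟨h1, h2⟩
  have hadjsymm : ∀ x y, G.adjOn 𝒳.rest x y → G.adjOn 𝒳.rest y x := by
    rintro x y ⟨hx, hy, e, he⟩
    exact ⟨hy, hx, e, hjsymm e x y he⟩
  have hforward : ∀ j k, a' < j → k < b' → j ≤ k →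
      Relation.ReflTransGen (G.adjOn 𝒳.rest) (v j) (v k) := by
    intro j k hj hk hjk
    induction k with
    | zero =>
      have : j = 0 := by omega
      rw [this]
    | succ k ih =>
      rcases lt_or_eq_of_le hjk with h | h
      · have hstep : G.adjOn 𝒳.rest (v k) (v (k+1)) := by
          refine ⟨hrun k (by omega) (by omega), hrun (k+1) (by omega) hk, ?_⟩
          exact ⟨p.edges.get ⟨k, by omega⟩, hjoins k (by omega)⟩
        exact (ih (by omega) (by omega)).tail hstep
      · rw [h]
  have hmemK : ∀ j, a' < j → j < b' → v j ∈ K := by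
    intro j h1 h2
    rcases le_or_gt i0 j with h | h
    · exact hforward i0 j ha'lt h2 h
    · have := hforward j i0 h1 (by omega) (le_of_lt h)
      have hsymm : Symmetric (G.adjOn 𝒳.rest) := fun x y => hadjsymm x y
      exact @Std.Symm.symm _ _ (@Relation.ReflTransGen.symmetric _ _ ⟨fun x y h => hsymm h⟩) _ _ this
  -- the two cut edges
  have ha'n : a' < n := by omega
  have hb'pos : 0 < b' := by omega
  have hb1n : b' - 1 < n := by omega
  set e1 := p.edges.get ⟨a', ha'n⟩ with he1
  set e2 := p.edges.get ⟨b' - 1, hb1n⟩ with he2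
  have hva'K : v a' ∉ K := fun h => ha'spec (hKrest h)
  have hva1K : v (a' + 1) ∈ K := hmemK (a' + 1) (by omega) (by omega)
  have hvb1K : v (b' - 1) ∈ K := hmemK (b' - 1) (by omega) (by omega)
  have hvb'K : v b' ∉ K := fun h => hb'spec (hKrest h)
  have hj1 : G.Joins e1 (v a') (v (a' + 1)) := hjoins a' ha'n
  have hj2 : G.Joins e2 (v (b' - 1)) (v b') := by
    have := hjoins (b' - 1) hb1n
    rwa [Nat.sub_add_cancel hb'pos] at this
  have he1cut : e1 ∈ G.cutE K := by
    rw [Multigraph.cutE, Finset.mem_filter]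
    refine ⟨Finset.mem_univ _, ?_⟩
    rcases hj1 with ⟨h1, h2⟩ | ⟨h1, h2⟩
    · exact Or.inr ⟨h1 ▸ hva'K, h2 ▸ hva1K⟩
    · exact Or.inl ⟨h1 ▸ hva1K, h2 ▸ hva'K⟩
  have he2cut : e2 ∈ G.cutE K := by
    rw [Multigraph.cutE, Finset.mem_filter]
    refine ⟨Finset.mem_univ _, ?_⟩
    rcases hj2 with ⟨h1, h2⟩ | ⟨h1, h2⟩
    · exact Or.inl ⟨h1 ▸ hvb1K, h2 ▸ hvb'K⟩
    · exact Or.inr ⟨h1 ▸ hvb'K, h2 ▸ hvb1K⟩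
  have hne12 : e1 ≠ e2 := by
    intro he
    rw [he] at hj1
    rcases hj1 with ⟨h1, h2⟩ | ⟨h1, h2⟩ <;> rcases hj2 with ⟨h1', h2'⟩ | ⟨h1', h2'⟩
    · have : a' = b' - 1 := hvinj _ _ (by omega) (by omega) (h1.symm.trans h1')
      omega
    · have : a' = b' := hvinj _ _ (by omega) (by omega) (h1.symm.trans h1')
      omega
    · have : a' = b' := hvinj _ _ (by omega) (by omega) (h2.symm.trans h2')
      omega
    · have : a' = b' - 1 := hvinj _ _ (by omega) (by omega) (h2.symm.trans h2')
      omega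
  refine ⟨K, hKcomp, ?_⟩
  have hsub : {e1, e2} ⊆ p.edges.toFinset ∩ G.cutE K := by
    intro e he
    rcases Finset.mem_insert.mp he with h | h
    · subst h
      exact Finset.mem_inter.mpr ⟨List.mem_toFinset.mpr (List.get_mem _ _), he1cut⟩
    · rw [Finset.mem_singleton] at h
      subst h
      exact Finset.mem_inter.mpr ⟨List.mem_toFinset.mpr (List.get_mem _ _), he2cut⟩
  calc 2 = ({e1, e2} : Finset G.E).card := by rw [Finset.card_insert_of_notMem (by simpa using hne12), Finset.card_singleton]
    _ ≤ _ := Finset.card_le_card hsub
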